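/- Let X⋆ ∈ ℝ^{I₁×I₂×I₃} have tubal rank R with skinny t-SVD X⋆ = U⋆*Σ⋆*V⋆ᵀ, let 0 < ε < 1 and 0 < τ ≤ 1, let L_{k+1} ∈ ℝ^{I₁×R×I₃}, R_{k+1} ∈ ℝ^{I₂×R×I₃}, let Q_k ∈ GL(R), and let Q_{k+1} be an optimal alignment tensor between (L_{k+1},R_{k+1}) and (L⋆,R⋆). Suppose that for both Q = Q_k and Q = Q_{k+1} one has ‖(L_{k+1}*Q − L⋆)*Σ⋆^{1/2}‖₂ ∨ ‖(R_{k+1}*Q^{−ᵀ} − R⋆)*Σ⋆^{1/2}‖₂ ≤ ε·τ^{k+1}·σ_min(X⋆). Then ‖Σ⋆^{1/2}*Q_k⁻¹*(Q_{k+1} − Q_k)*Σ⋆^{1/2}‖₂ ∨ ‖Σ⋆^{1/2}*Q_kᵀ*(Q_{k+1}^{−ᵀ} − Q_k^{−ᵀ})*Σ⋆^{1/2}‖₂ ≤ (2ε/(1 − ε))·σ_min(X⋆). -/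

import Mathlib

open scoped BigOperators
open Matrix

/-- An order-3 real tensor. -/
abbrev Tensor (I₁ I₂ I₃ : ℕ) := Fin I₁ → Fin I₂ → Fin I₃ → ℝ

namespace RTPCA

variable {I₁ I₂ I₃ J R : ℕ}

/-- The t-product, computed by circular convolution along the third mode
(equivalently, slice-wise products in the Fourier domain). -/
noncomputable def tprod (A : Tensor I₁ I₂ I₃) (B : Tensor I₂ J I₃) : Tensor I₁ J I₃ :=
  fun i j k => ∑ l : Fin I₂, ∑ t : Fin I₃, A i l t * B l j (k - t)

/-- The tensor transpose: transpose each frontal slice and reverse the order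
of the frontal slices 2 through I₃. -/
def tT (A : Tensor I₁ I₂ I₃) : Tensor I₂ I₁ I₃ :=
  fun j i k => A i j (-k)

/-- The identity tensor: first frontal slice is the identity, the rest are zero. -/
def idT (R I₃ : ℕ) : Tensor R R I₃ :=
  fun i j k => if i = j ∧ (k : ℕ) = 0 then 1 else 0

/-- Discrete Fourier transform along the third mode. -/
noncomputable def dft (A : Tensor I₁ I₂ I₃) (i : Fin I₁) (j : Fin I₂) (k : Fin I₃) : ℂ :=
  ∑ t : Fin I₃, (A i j t : ℂ) *
    Complex.exp (-(2 * Real.pi * Complex.I * (k.val : ℂ) * (t.val : ℂ)) / (I₃ : ℂ))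

/-- Fourier-domain frontal slice. -/
noncomputable def fSlice (A : Tensor I₁ I₂ I₃) (k : Fin I₃) : Matrix (Fin I₁) (Fin I₂) ℂ :=
  Matrix.of fun i j => dft A i j k

/-- Inverse DFT along the third mode (real part). -/
noncomputable def invDft (F : Fin I₁ → Fin I₂ → Fin I₃ → ℂ) : Tensor I₁ I₂ I₃ :=
  fun i j t =>
    ((∑ k : Fin I₃, F i j k *
      Complex.exp ((2 * Real.pi * Complex.I * (k.val : ℂ) * (t.val : ℂ)) / (I₃ : ℂ))) / (I₃ : ℂ)).re

/-- Squared Frobenius norm. -/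
noncomputable def fro2 (A : Tensor I₁ I₂ I₃) : ℝ := ∑ i, ∑ j, ∑ k, (A i j k) ^ 2

/-- Frobenius norm. -/
noncomputable def froNorm (A : Tensor I₁ I₂ I₃) : ℝ := Real.sqrt (fro2 A)

/-- Entrywise sup norm ‖A‖_∞. -/
noncomputable def infNorm (A : Tensor I₁ I₂ I₃) : ℝ := ⨆ i, ⨆ j, ⨆ k, |A i j k|

/-- ℓ_{2,∞} norm: largest ℓ₂ norm of a horizontal slice. -/
noncomputable def twoInfNorm (A : Tensor I₁ I₂ I₃) : ℝ :=
  ⨆ i, Real.sqrt (∑ j, ∑ k, (A i j k) ^ 2)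

/-- ℓ_{1,∞} norm: largest ℓ₁ norm of a horizontal slice. -/
noncomputable def oneInfNorm (A : Tensor I₁ I₂ I₃) : ℝ := ⨆ i, ∑ j, ∑ k, |A i j k|

/-- Spectral norm (largest singular value) of a complex matrix. -/
noncomputable def matSpecNorm {m n : ℕ} (M : Matrix (Fin m) (Fin n) ℂ) : ℝ :=
  ‖LinearMap.toContinuousLinearMap (Matrix.toEuclideanLin M)‖

/-- Tensor spectral norm = tensor operator norm: the largest singular value of
the Fourier-domain frontal slices. -/
noncomputable def specNorm (A : Tensor I₁ I₂ I₃) : ℝ :=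
  ⨆ k : Fin I₃, matSpecNorm (fSlice A k)

/-- f-diagonal in the Fourier domain with strictly positive diagonal entries. -/
def FDiagPos (S : Tensor R R I₃) : Prop :=
  (∀ k, ∀ i j : Fin R, i ≠ j → fSlice S k i j = 0) ∧
  (∀ k, ∀ i : Fin R, 0 < (fSlice S k i i).re ∧ (fSlice S k i i).im = 0)

/-- f-diagonal in the Fourier domain with nonnegative diagonal entries. -/
def FDiagNonneg (S : Tensor R R I₃) : Prop :=
  (∀ k, ∀ i j : Fin R, i ≠ j → fSlice S k i j = 0) ∧
  (∀ k, ∀ i : Fin R, 0 ≤ (fSlice S k i i).re ∧ (fSlice S k i i).im = 0)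

/-- Skinny t-SVD with tubal rank R (strictly positive Fourier-domain diagonal). -/
structure IsSkinnyTSVD (X : Tensor I₁ I₂ I₃) (U : Tensor I₁ R I₃)
    (S : Tensor R R I₃) (V : Tensor I₂ R I₃) : Prop where
  decomp : X = tprod (tprod U S) (tT V)
  orthU : tprod (tT U) U = idT R I₃
  orthV : tprod (tT V) V = idT R I₃
  diag : FDiagPos S

/-- Skinny t-SVD with tubal rank at most R (nonnegative diagonal allowed). -/
structure IsSkinnyTSVDLe (X : Tensor I₁ I₂ I₃) (U : Tensor I₁ R I₃)
    (S : Tensor R R I₃) (V : Tensor I₂ R I₃) : Prop where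
  decomp : X = tprod (tprod U S) (tT V)
  orthU : tprod (tT U) U = idT R I₃
  orthV : tprod (tT V) V = idT R I₃
  diag : FDiagNonneg S

/-- σ_min: the smallest Fourier-domain diagonal entry of Σ. -/
noncomputable def sigmaMin (S : Tensor R R I₃) : ℝ :=
  ⨅ k : Fin I₃, ⨅ i : Fin R, (fSlice S k i i).re

/-- σ_max (= σ₁): the largest Fourier-domain diagonal entry of Σ. -/
noncomputable def sigmaMax (S : Tensor R R I₃) : ℝ :=
  ⨆ k : Fin I₃, ⨆ i : Fin R, (fSlice S k i i).re

/-- Condition number κ = σ_max / σ_min. -/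
noncomputable def condNum (S : Tensor R R I₃) : ℝ := sigmaMax S / sigmaMin S

/-- Σ^{1/2}: entrywise square roots in the Fourier domain. -/
noncomputable def sqrtT (S : Tensor R R I₃) : Tensor R R I₃ :=
  invDft fun i j k => (Real.sqrt ((dft S i j k).re) : ℂ)

/-- Σ^{-1/2}: entrywise reciprocal square roots in the Fourier domain. -/
noncomputable def invSqrtT (S : Tensor R R I₃) : Tensor R R I₃ :=
  invDft fun i j k => (((Real.sqrt ((dft S i j k).re))⁻¹ : ℝ) : ℂ)

/-- `Qi` is a two-sided t-product inverse of `Q` (i.e. `Q ∈ GL(R)`). -/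
def TInv (Q Qi : Tensor R R I₃) : Prop :=
  tprod Q Qi = idT R I₃ ∧ tprod Qi Q = idT R I₃

/-- Alignment error (the quantity inside the infimum defining `distT`)
for a given invertible Q with inverse Qi. -/
noncomputable def alignErr (L Ls : Tensor I₁ R I₃) (Rt Rs : Tensor I₂ R I₃)
    (Sh : Tensor R R I₃) (Q Qi : Tensor R R I₃) : ℝ :=
  Real.sqrt ((froNorm (tprod (tprod L Q - Ls) Sh)) ^ 2 +
    (froNorm (tprod (tprod Rt (tT Qi) - Rs) Sh)) ^ 2)

/-- The distance metric dist(L,R;L⋆,R⋆): the infimum of alignment errors over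
invertible tensors Q, where `Sh` is Σ⋆^{1/2}. -/
noncomputable def distT (L Ls : Tensor I₁ R I₃) (Rt Rs : Tensor I₂ R I₃)
    (Sh : Tensor R R I₃) : ℝ :=
  sInf {d : ℝ | ∃ Q Qi : Tensor R R I₃, TInv Q Qi ∧ d = alignErr L Ls Rt Rs Sh Q Qi}

/-- Q (with inverse Qi) is an optimal alignment tensor: it attains the infimum
defining the distance metric. -/
def IsOptAlign (L Ls : Tensor I₁ R I₃) (Rt Rs : Tensor I₂ R I₃)
    (Sh : Tensor R R I₃) (Q Qi : Tensor R R I₃) : Prop :=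
  TInv Q Qi ∧ alignErr L Ls Rt Rs Sh Q Qi = distT L Ls Rt Rs Sh

/-- Entrywise soft-thresholding. -/
noncomputable def softThresh (ζ : ℝ) (A : Tensor I₁ I₂ I₃) : Tensor I₁ I₂ I₃ :=
  fun i j k => Real.sign (A i j k) * max 0 (|A i j k| - ζ)

/-- Support: the set of index triples at which the tensor is nonzero. -/
def supp (A : Tensor I₁ I₂ I₃) : Set (Fin I₁ × Fin I₂ × Fin I₃) :=
  {p | A p.1 p.2.1 p.2.2 ≠ 0}

/-- α-sparsity: every horizontal, lateral and frontal slice has at most an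
α fraction of nonzero entries. -/
def IsSparse (α : ℝ) (S : Tensor I₁ I₂ I₃) : Prop :=
  (∀ i₁ : Fin I₁, ({p : Fin I₂ × Fin I₃ | S i₁ p.1 p.2 ≠ 0}.ncard : ℝ) ≤ α * I₂ * I₃) ∧
  (∀ i₂ : Fin I₂, ({p : Fin I₁ × Fin I₃ | S p.1 i₂ p.2 ≠ 0}.ncard : ℝ) ≤ α * I₁ * I₃) ∧
  (∀ i₃ : Fin I₃, ({p : Fin I₁ × Fin I₂ | S p.1 p.2 i₃ ≠ 0}.ncard : ℝ) ≤ α * I₁ * I₂)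

/-- Tensor μ-incoherence conditions for the skinny t-SVD factors U, V. -/
def Incoherent (μ : ℝ) (U : Tensor I₁ R I₃) (V : Tensor I₂ R I₃) : Prop :=
  twoInfNorm U ≤ Real.sqrt (μ * R / I₁) ∧ twoInfNorm V ≤ Real.sqrt (μ * R / I₂)

/-- Top-R truncated t-SVD of A: a skinny t-SVD-shaped factorization which, in
every Fourier-domain frontal slice, keeps R largest singular values together
with their singular vectors (the residual is orthogonal to the kept singular
vectors and its spectral norm is at most every kept singular value). -/
structure IsTruncTSVD (A : Tensor I₁ I₂ I₃) (U : Tensor I₁ R I₃)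
    (S : Tensor R R I₃) (V : Tensor I₂ R I₃) : Prop where
  orthU : tprod (tT U) U = idT R I₃
  orthV : tprod (tT V) V = idT R I₃
  diag : FDiagNonneg S
  leftOrth : ∀ k, (fSlice U k)ᴴ * (fSlice A k - fSlice (tprod (tprod U S) (tT V)) k) = 0
  rightOrth : ∀ k, (fSlice A k - fSlice (tprod (tprod U S) (tT V)) k) * fSlice V k = 0
  topR : ∀ k, ∀ r : Fin R,
    matSpecNorm (fSlice A k - fSlice (tprod (tprod U S) (tT V)) k) ≤ (fSlice S k r r).re

end RTPCA

open RTPCA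

namespace AlignAux
open Complex

noncomputable def ee (n : ℕ) (c : ℤ) : ℂ := Complex.exp (2 * Real.pi * Complex.I * c / n)

lemma ee_add (n : ℕ) (a b : ℤ) : ee n (a + b) = ee n a * ee n b := by
  rw [ee, ee, ee, ← Complex.exp_add]
  congr 1
  push_cast
  ring

lemma ee_zero (n : ℕ) : ee n 0 = 1 := by simp [ee]

lemma ee_mul_n (n : ℕ) (m : ℤ) : ee n (m * n) = 1 := by
  by_cases hn : n = 0
  · simp [ee, hn]
  · rw [ee]
    have hn' : (n : ℂ) ≠ 0 := Nat.cast_ne_zero.mpr hn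
    have : (2 * (Real.pi : ℂ) * Complex.I * ((m : ℤ) * (n : ℕ) : ℤ) / n : ℂ)
        = (m : ℤ) * (2 * Real.pi * Complex.I) := by
      push_cast
      field_simp
    rw [this, Complex.exp_int_mul_two_pi_mul_I]

lemma ee_periodic (n : ℕ) (a m : ℤ) : ee n (a + m * n) = ee n a := by
  rw [ee_add, ee_mul_n, mul_one]

lemma ee_emod (n : ℕ) (a : ℤ) : ee n (a % n) = ee n a := by
  conv_rhs => rw [show a = a % n + (a / n) * n by rw [show (a / (n:ℤ)) * n = (n:ℤ) * (a / n) from mul_comm _ _]; exact (Int.emod_add_mul_ediv a n).symm]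
  rw [ee_periodic]

lemma ee_congr (n : ℕ) {a b : ℤ} (h : a ≡ b [ZMOD (n : ℤ)]) : ee n a = ee n b := by
  rw [← ee_emod n a, ← ee_emod n b]
  rw [Int.ModEq] at h
  rw [h]

lemma ee_pow (n : ℕ) (c : ℤ) (t : ℕ) : ee n c ^ t = ee n (c * t) := by
  rw [ee, ee, ← Complex.exp_nat_mul]
  congr 1
  push_cast
  ring

lemma ee_conj (n : ℕ) (c : ℤ) : (starRingEnd ℂ) (ee n c) = ee n (-c) := by
  rw [ee, ee, ← Complex.exp_conj]
  congr 1
  simp only [map_div₀, _root_.map_mul, Complex.conj_I, Complex.conj_ofReal, map_ofNat,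
    map_intCast, map_natCast, map_neg]
  push_cast
  ring

lemma ee_eq_one_iff (n : ℕ) (hn : 0 < n) (c : ℤ) : ee n c = 1 ↔ (n : ℤ) ∣ c := by
  rw [ee, Complex.exp_eq_one_iff]
  have hπ : (2 * (Real.pi : ℂ) * Complex.I) ≠ 0 := by
    simp [Real.pi_ne_zero, Complex.I_ne_zero, Complex.ofReal_ne_zero]
  have hn' : (n : ℂ) ≠ 0 := Nat.cast_ne_zero.mpr hn.ne'
  constructor
  · rintro ⟨m, hm⟩
    refine ⟨m, ?_⟩
    rw [div_eq_iff hn'] at hm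
    have h2 : (c : ℂ) = ((n * m : ℤ) : ℂ) := by
      apply mul_left_cancel₀ hπ
      push_cast
      linear_combination hm
    exact_mod_cast h2
  · rintro ⟨m, rfl⟩
    refine ⟨m, ?_⟩
    push_cast
    field_simp

lemma sum_ee (n : ℕ) (hn : 0 < n) (c : ℤ) :
    (∑ t : Fin n, ee n (c * t.val)) = if (n : ℤ) ∣ c then (n : ℂ) else 0 := by
  have h1 : ∀ t : Fin n, ee n (c * t.val) = ee n c ^ t.val := fun t => (ee_pow n c t.val).symm
  simp_rw [h1]
  rw [Fin.sum_univ_eq_sum_range (fun t => ee n c ^ t) n]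
  by_cases h : (n : ℤ) ∣ c
  · rw [if_pos h, (ee_eq_one_iff n hn c).mpr h]
    simp
  · rw [if_neg h]
    have hne : ee n c ≠ 1 := fun hh => h ((ee_eq_one_iff n hn c).mp hh)
    rw [geom_sum_eq hne]
    have : ee n c ^ n = 1 := by
      rw [ee_pow]
      exact (ee_eq_one_iff n hn _).mpr ⟨c, mul_comm c n⟩
    simp [this]

end AlignAux

namespace AlignAux
open RTPCA Complex Matrix

variable {I₁ I₂ I₃ J R n : ℕ}

lemma fin_val_add_mod [NeZero n] (s u : Fin n) :
    (((s + u : Fin n).val : ℤ)) ≡ (s.val : ℤ) + u.val [ZMOD (n : ℤ)] := by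
  have h : (s + u : Fin n).val = (s.val + u.val) % n := Fin.val_add s u
  have h2 : ((s + u : Fin n).val : ℤ) = ((s.val : ℤ) + u.val) % (n : ℤ) := by
    rw [h]; push_cast; ring
  rw [h2]
  exact Int.emod_emod_of_dvd _ dvd_rfl

lemma fin_val_neg_mod [NeZero n] (s : Fin n) :
    (((-s : Fin n).val : ℤ)) ≡ -(s.val : ℤ) [ZMOD (n : ℤ)] := by
  have h : ((-s : Fin n) + s).val = ((-s : Fin n).val + s.val) % n := Fin.val_add _ s
  rw [neg_add_cancel] at h
  have h0 : ((-s : Fin n).val + s.val) % n = 0 := h.symm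
  have hd : (n : ℤ) ∣ (((-s : Fin n).val : ℤ) + s.val) := by
    exact_mod_cast Int.natCast_dvd_natCast.mpr (Nat.dvd_of_mod_eq_zero h0)
  rw [Int.modEq_iff_dvd]
  have h2 : -(s.val : ℤ) - ((-s : Fin n).val : ℤ)
      = -(((-s : Fin n).val : ℤ) + s.val) := by ring
  rw [h2]
  exact dvd_neg.mpr hd

lemma ee_split [NeZero n] (κ : ℕ) (s u : Fin n) :
    ee n (-((κ : ℤ) * ((s + u : Fin n).val : ℤ)))
      = ee n (-((κ : ℤ) * s.val)) * ee n (-((κ : ℤ) * u.val)) := by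
  rw [← ee_add]
  apply ee_congr
  have h := ((fin_val_add_mod s u).mul_left (κ : ℤ)).neg
  have h2 : (-((κ : ℤ) * ((s.val : ℤ) + u.val)))
      = -((κ : ℤ) * s.val) + -((κ : ℤ) * u.val) := by ring
  rw [h2] at h
  exact h

lemma ee_neg_split [NeZero n] (κ : ℕ) (s : Fin n) :
    ee n (-((κ : ℤ) * ((-s : Fin n).val : ℤ))) = ee n ((κ : ℤ) * s.val) := by
  apply ee_congr
  have h := ((fin_val_neg_mod s).mul_left (κ : ℤ)).neg
  have h2 : (-((κ : ℤ) * (-(s.val : ℤ)))) = (κ : ℤ) * s.val := by ring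
  rw [h2] at h
  exact h

lemma dft_eq (A : Tensor I₁ I₂ I₃) (i : Fin I₁) (j : Fin I₂) (k : Fin I₃) :
    dft A i j k = ∑ t : Fin I₃, (A i j t : ℂ) * ee I₃ (-((k.val : ℤ) * t.val)) := by
  unfold RTPCA.dft ee
  refine Finset.sum_congr rfl fun t _ => ?_
  congr 1
  push_cast
  ring

lemma fSlice_apply (A : Tensor I₁ I₂ I₃) (k : Fin I₃) (i j) :
    fSlice A k i j = dft A i j k := rfl

lemma fSlice_tprod [NeZero I₃] (A : Tensor I₁ I₂ I₃) (B : Tensor I₂ J I₃) (k : Fin I₃) :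
    fSlice (tprod A B) k = fSlice A k * fSlice B k := by
  ext i j
  rw [Matrix.mul_apply]
  show dft (tprod A B) i j k = ∑ l, dft A i l k * dft B l j k
  simp_rw [dft_eq]
  unfold RTPCA.tprod
  push_cast
  simp_rw [Finset.sum_mul]
  rw [Finset.sum_comm]
  refine Finset.sum_congr rfl fun l _ => ?_
  rw [Finset.sum_comm]
  refine Finset.sum_congr rfl fun s _ => ?_
  rw [Finset.mul_sum]
  rw [← Equiv.sum_comp (Equiv.addLeft s)
    (fun t => (A i l s : ℂ) * (B l j (t - s) : ℂ) * ee I₃ (-((k.val : ℤ) * t.val)))]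
  refine Finset.sum_congr rfl fun u _ => ?_
  simp only [Equiv.coe_addLeft]
  rw [add_sub_cancel_left, ee_split]
  ring

lemma fSlice_tT [NeZero I₃] (A : Tensor I₁ I₂ I₃) (k : Fin I₃) :
    fSlice (tT A) k = (fSlice A k)ᴴ := by
  ext j i
  rw [Matrix.conjTranspose_apply]
  show dft (tT A) j i k = star (dft A i j k)
  rw [dft_eq, dft_eq]
  have : star (∑ t : Fin I₃, (A i j t : ℂ) * ee I₃ (-((k.val : ℤ) * t.val)))
      = ∑ t : Fin I₃, (A i j t : ℂ) * ee I₃ ((k.val : ℤ) * t.val) := by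
    rw [star_sum]
    refine Finset.sum_congr rfl fun t _ => ?_
    show (starRingEnd ℂ) _ = _
    rw [_root_.map_mul, Complex.conj_ofReal, ee_conj, neg_neg]
  rw [this]
  unfold RTPCA.tT
  rw [← Equiv.sum_comp (Equiv.neg (Fin I₃))
    (fun t => (A i j (-t) : ℂ) * ee I₃ (-((k.val : ℤ) * t.val)))]
  refine Finset.sum_congr rfl fun u _ => ?_
  simp only [Equiv.neg_apply, neg_neg]
  rw [ee_neg_split]

lemma fSlice_sub (A B : Tensor I₁ I₂ I₃) (k : Fin I₃) :
    fSlice (A - B) k = fSlice A k - fSlice B k := by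
  ext i j
  show dft (A - B) i j k = dft A i j k - dft B i j k
  simp_rw [dft_eq]
  rw [← Finset.sum_sub_distrib]
  refine Finset.sum_congr rfl fun t _ => ?_
  have : ((A - B) i j t : ℝ) = A i j t - B i j t := rfl
  rw [this]
  push_cast
  ring

lemma fSlice_idT [NeZero I₃] (k : Fin I₃) :
    fSlice (idT R I₃) k = (1 : Matrix (Fin R) (Fin R) ℂ) := by
  ext i j
  show dft (idT R I₃) i j k = _
  rw [dft_eq]
  unfold RTPCA.idT
  by_cases h : i = j
  · subst h
    rw [Matrix.one_apply_eq]
    rw [Finset.sum_eq_single (0 : Fin I₃)]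
    · simp [ee_zero]
    · intro t _ ht
      have : (t : ℕ) ≠ 0 := fun hh => ht (Fin.ext hh)
      simp [this]
    · intro h
      exact absurd (Finset.mem_univ _) h
  · rw [Matrix.one_apply_ne h]
    simp [h]

end AlignAux

namespace AlignAux
open RTPCA Complex Matrix

variable {I₁ I₂ I₃ J R : ℕ}

lemma dft_neg_slice [NeZero I₃] (A : Tensor I₁ I₂ I₃) (i : Fin I₁) (j : Fin I₂) (k : Fin I₃) :
    dft A i j (-k) = (starRingEnd ℂ) (dft A i j k) := by
  rw [dft_eq, dft_eq, map_sum]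
  refine Finset.sum_congr rfl fun t _ => ?_
  rw [_root_.map_mul, Complex.conj_ofReal, ee_conj, neg_neg]
  congr 1
  apply ee_congr
  have h := ((fin_val_neg_mod k).mul_right (t.val : ℤ)).neg
  have h2 : -(-(k.val : ℤ) * t.val) = (k.val : ℤ) * t.val := by ring
  rw [h2] at h
  exact h

lemma dvd_sub_iff_eq (hn : 0 < I₃) (k m : Fin I₃) :
    ((I₃ : ℤ) ∣ ((k.val : ℤ) - m.val)) ↔ k = m := by
  constructor
  · intro h
    have h1 : |((k.val : ℤ) - m.val)| < I₃ := by
      have := k.is_lt; have := m.is_lt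
      rw [abs_lt]; constructor <;> [skip; skip] <;> omega
    have := Int.eq_zero_of_abs_lt_dvd h h1
    have : (k.val : ℤ) = m.val := by omega
    exact Fin.ext (by exact_mod_cast this)
  · rintro rfl; simp

lemma dft_invDft_real_even [NeZero I₃] (F : Fin I₁ → Fin I₂ → Fin I₃ → ℂ)
    (hre : ∀ i j k, (F i j k).im = 0)
    (hev : ∀ i j k, F i j (-k) = F i j k) (i : Fin I₁) (j : Fin I₂) (m : Fin I₃) :
    dft (invDft F) i j m = F i j m := by
  have hn : 0 < I₃ := Nat.pos_of_ne_zero (NeZero.ne I₃)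
  have hnC : (I₃ : ℂ) ≠ 0 := Nat.cast_ne_zero.mpr hn.ne'
  set T : Fin I₃ → ℂ := fun t => ∑ k : Fin I₃, F i j k * ee I₃ ((k.val : ℤ) * t.val) with hT
  have hTsum : ∀ t : Fin I₃, (∑ k : Fin I₃, F i j k *
      Complex.exp ((2 * Real.pi * Complex.I * (k.val : ℂ) * (t.val : ℂ)) / (I₃ : ℂ))) = T t := by
    intro t
    refine Finset.sum_congr rfl fun k _ => ?_
    congr 1
    rw [ee]
    congr 1
    push_cast
    ring
  have hTreal : ∀ t, (T t).im = 0 := by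
    intro t
    have hc : (starRingEnd ℂ) (T t) = T t := by
      rw [hT]
      simp only [map_sum, _root_.map_mul]
      rw [← Equiv.sum_comp (Equiv.neg (Fin I₃))
        (fun k => F i j k * ee I₃ ((k.val : ℤ) * t.val))]
      refine Finset.sum_congr rfl fun u _ => ?_
      simp only [Equiv.neg_apply]
      rw [hev, ee_conj]
      have hFu : (starRingEnd ℂ) (F i j u) = F i j u :=
        Complex.conj_eq_iff_im.mpr (hre i j u)
      rw [hFu]
      congr 1
      apply ee_congr
      have h := ((fin_val_neg_mod u).mul_right (t.val : ℤ))
      have h2 : (-(u.val : ℤ)) * t.val = -((u.val : ℤ) * t.val) := by ring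
      rw [h2] at h
      exact h.symm
    exact Complex.conj_eq_iff_im.mp hc
  have hinv : ∀ t : Fin I₃, ((invDft F i j t : ℝ) : ℂ) = T t / I₃ := by
    intro t
    unfold RTPCA.invDft
    rw [hTsum t]
    have ht' : T t = ((T t).re : ℂ) := Complex.ext rfl (by simp [hTreal t])
    rw [ht']
    rw [show ((T t).re : ℂ) / (I₃ : ℂ) = (((T t).re / (I₃ : ℕ) : ℝ) : ℂ) by push_cast; ring]
    rw [Complex.ofReal_re]
  rw [dft_eq]
  simp_rw [hinv]
  have hmain : ∑ t : Fin I₃, (T t / I₃) * ee I₃ (-((m.val : ℤ) * t.val))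
      = (∑ k : Fin I₃, F i j k * (∑ t : Fin I₃, ee I₃ (((k.val : ℤ) - m.val) * t.val))) / I₃ := by
    simp_rw [hT, Finset.sum_div, Finset.sum_mul, div_mul_eq_mul_div]
    rw [Finset.sum_comm]
    refine Finset.sum_congr rfl fun k _ => ?_
    rw [Finset.mul_sum, Finset.sum_div]
    refine Finset.sum_congr rfl fun t _ => ?_
    congr 1
    rw [mul_assoc, ← ee_add]
    congr 1
    ring
  rw [hmain]
  have hone : ∀ k : Fin I₃, (∑ t : Fin I₃, ee I₃ (((k.val : ℤ) - m.val) * t.val))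
      = if k = m then (I₃ : ℂ) else 0 := by
    intro k
    rw [sum_ee I₃ hn]
    by_cases h : k = m
    · rw [if_pos ((dvd_sub_iff_eq hn k m).mpr h), if_pos h]
    · rw [if_neg (fun hd => h ((dvd_sub_iff_eq hn k m).mp hd)), if_neg h]
  simp_rw [hone]
  rw [Finset.sum_eq_single m]
  · rw [if_pos rfl]
    field_simp
  · intro t _ ht
    rw [if_neg ht, mul_zero]
  · intro h
    exact absurd (Finset.mem_univ _) h

lemma fSlice_sqrtT [NeZero I₃] (Sig : Tensor R R I₃) (k : Fin I₃) (i j : Fin R) :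
    fSlice (sqrtT Sig) k i j = ((Real.sqrt ((dft Sig i j k).re) : ℝ) : ℂ) := by
  show dft (sqrtT Sig) i j k = _
  unfold RTPCA.sqrtT
  exact dft_invDft_real_even _ (fun i j k => Complex.ofReal_im _)
    (fun i j k => by rw [dft_neg_slice]; simp [Complex.conj_re]) i j k

end AlignAux

namespace AlignAux
open RTPCA Complex Matrix

noncomputable def ev {m : ℕ} (v : Fin m → ℂ) : EuclideanSpace ℂ (Fin m) :=
  (WithLp.equiv 2 (Fin m → ℂ)).symm v

lemma ev_add {m : ℕ} (v w : Fin m → ℂ) : ev (v + w) = ev v + ev w := rfl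

lemma ev_sub {m : ℕ} (v w : Fin m → ℂ) : ev (v - w) = ev v - ev w := rfl

lemma ev_norm {m : ℕ} (v : Fin m → ℂ) : ‖ev v‖ = Real.sqrt (∑ i, ‖v i‖ ^ 2) := by
  rw [EuclideanSpace.norm_eq]
  rfl

lemma toEuc_apply {m n : ℕ} (M : Matrix (Fin m) (Fin n) ℂ) (v : Fin n → ℂ) :
    (LinearMap.toContinuousLinearMap (Matrix.toEuclideanLin M)) (ev v) = ev (M *ᵥ v) := rfl

lemma matSpec_bound {m n : ℕ} (M : Matrix (Fin m) (Fin n) ℂ) (v : Fin n → ℂ) :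
    ‖ev (M *ᵥ v)‖ ≤ matSpecNorm M * ‖ev v‖ := by
  rw [← toEuc_apply]
  exact ContinuousLinearMap.le_opNorm _ _

lemma matSpecNorm_nonneg {m n : ℕ} (M : Matrix (Fin m) (Fin n) ℂ) : 0 ≤ matSpecNorm M :=
  norm_nonneg _

lemma matSpecNorm_le_of {m n : ℕ} (M : Matrix (Fin m) (Fin n) ℂ) {c : ℝ} (hc : 0 ≤ c)
    (h : ∀ v : Fin n → ℂ, ‖ev (M *ᵥ v)‖ ≤ c * ‖ev v‖) : matSpecNorm M ≤ c := by
  apply ContinuousLinearMap.opNorm_le_bound _ hc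
  intro x
  exact h ((WithLp.equiv 2 (Fin n → ℂ)) x)

lemma sum_norm_sq_eq {m : ℕ} (w : Fin m → ℂ) : (star w ⬝ᵥ w).re = ∑ i, ‖w i‖ ^ 2 := by
  rw [dotProduct, Complex.re_sum]
  refine Finset.sum_congr rfl fun i _ => ?_
  have h1 : (star w) i * w i = (Complex.normSq (w i) : ℂ) := by
    rw [Complex.normSq_eq_conj_mul_self]
    rfl
  rw [h1, Complex.ofReal_re, Complex.normSq_eq_norm_sq]

lemma norm_mulVec_isometry {m r : ℕ} (U : Matrix (Fin m) (Fin r) ℂ) (hU : Uᴴ * U = 1)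
    (v : Fin r → ℂ) : ‖ev (U *ᵥ v)‖ = ‖ev v‖ := by
  rw [ev_norm, ev_norm, ← sum_norm_sq_eq, ← sum_norm_sq_eq]
  congr 1
  rw [star_mulVec, ← Matrix.dotProduct_mulVec, Matrix.mulVec_mulVec, hU, Matrix.one_mulVec]

lemma key {m r : ℕ} (U L : Matrix (Fin m) (Fin r) ℂ) (K Ki K1 : Matrix (Fin r) (Fin r) ℂ)
    (s : Fin r → ℝ) (σ b ε : ℝ) (hσ : 0 < σ) (hε0 : 0 < ε) (hε1 : ε < 1) (hb0 : 0 ≤ b)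
    (hbε : b ≤ ε * σ) (hs0 : ∀ i, 0 ≤ s i) (hs : ∀ i, σ ≤ s i ^ 2)
    (hU : Uᴴ * U = 1) (hK : K * Ki = 1)
    (h1 : matSpecNorm ((L * K - U * Matrix.diagonal (fun i => ((s i : ℝ) : ℂ)))
            * Matrix.diagonal (fun i => ((s i : ℝ) : ℂ))) ≤ b)
    (h2 : matSpecNorm ((L * K1 - U * Matrix.diagonal (fun i => ((s i : ℝ) : ℂ)))
            * Matrix.diagonal (fun i => ((s i : ℝ) : ℂ))) ≤ b) :
    matSpecNorm (Matrix.diagonal (fun i => ((s i : ℝ) : ℂ)) * Ki * (K1 - K)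
      * Matrix.diagonal (fun i => ((s i : ℝ) : ℂ))) ≤ 2 * ε / (1 - ε) * σ := by
  set S := Matrix.diagonal (fun i => ((s i : ℝ) : ℂ)) with hS
  have h1ε : 0 < 1 - ε := by linarith
  have hsi : ∀ i, 0 < s i := fun i => by nlinarith [hs i, hs0 i]
  apply matSpecNorm_le_of _ (mul_nonneg (div_nonneg (by linarith) h1ε.le) hσ.le)
  intro x
  set z : Fin r → ℂ := (Ki * (K1 - K) * S) *ᵥ x with hz
  have hGx : (S * Ki * (K1 - K) * S) *ᵥ x = S *ᵥ z := by
    rw [hz, Matrix.mulVec_mulVec]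
    congr 1
    simp only [Matrix.mul_assoc]
  have hfac : (L * K1 - U * S) * S - (L * K - U * S) * S = (L * K) * (Ki * (K1 - K) * S) := by
    have hassoc : (L * K) * (Ki * (K1 - K) * S) = L * (K * Ki) * ((K1 - K) * S) := by
      simp only [Matrix.mul_assoc]
    rw [hassoc, hK, Matrix.mul_one]
    simp only [Matrix.sub_mul, Matrix.mul_sub, Matrix.mul_assoc]
    abel
  have hMz : ((L * K1 - U * S) * S) *ᵥ x - ((L * K - U * S) * S) *ᵥ x = (L * K) *ᵥ z := by
    rw [← Matrix.sub_mulVec, hfac, hz, Matrix.mulVec_mulVec]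
  set w : Fin r → ℂ := fun i => ((s i : ℂ))⁻¹ * z i with hw
  have hSw : S *ᵥ w = z := by
    ext i
    rw [hS, Matrix.mulVec_diagonal]
    rw [hw]
    have : ((s i : ℝ) : ℂ) ≠ 0 := Complex.ofReal_ne_zero.mpr (hsi i).ne'
    field_simp
  have hnormw : ‖ev w‖ ≤ (1 / σ) * ‖ev (S *ᵥ z)‖ := by
    rw [ev_norm, ev_norm]
    rw [show (1 / σ) = Real.sqrt ((1 / σ) ^ 2) from (Real.sqrt_sq (by positivity)).symm]
    rw [← Real.sqrt_mul (by positivity)]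
    apply Real.sqrt_le_sqrt
    rw [Finset.mul_sum]
    apply Finset.sum_le_sum
    intro i _
    rw [hS, Matrix.mulVec_diagonal, hw]
    have hns : ‖((s i : ℝ) : ℂ)‖ = s i := by
      rw [Complex.norm_real, Real.norm_eq_abs, _root_.abs_of_nonneg (hs0 i)]
    rw [norm_mul, norm_mul, norm_inv, hns]
    have hzn : 0 ≤ ‖z i‖ := norm_nonneg _
    have hsig : σ ≤ s i ^ 2 := hs i
    have hsipos : 0 < s i := hsi i
    have e1 : ((s i)⁻¹ * ‖z i‖) ^ 2 = ‖z i‖ ^ 2 / s i ^ 2 := by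
      field_simp
    have e2 : (1 / σ) ^ 2 * (s i * ‖z i‖) ^ 2 = s i ^ 2 * ‖z i‖ ^ 2 / σ ^ 2 := by
      field_simp
    rw [e1, e2, div_le_div_iff₀ (by positivity) (by positivity)]
    nlinarith [mul_le_mul hsig hsig hσ.le (sq_nonneg (s i)), sq_nonneg (‖z i‖)]
  have hclose : ‖ev ((L * K - U * S) *ᵥ z)‖ ≤ ε * ‖ev (S *ᵥ z)‖ := by
    have hrw : (L * K - U * S) *ᵥ z = ((L * K - U * S) * S) *ᵥ w := by
      rw [← Matrix.mulVec_mulVec, hSw]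
    rw [hrw]
    calc ‖ev (((L * K - U * S) * S) *ᵥ w)‖ ≤ matSpecNorm ((L * K - U * S) * S) * ‖ev w‖ :=
          matSpec_bound _ _
      _ ≤ b * ‖ev w‖ := mul_le_mul_of_nonneg_right h1 (norm_nonneg _)
      _ ≤ b * ((1 / σ) * ‖ev (S *ᵥ z)‖) := mul_le_mul_of_nonneg_left hnormw hb0
      _ ≤ ε * ‖ev (S *ᵥ z)‖ := by
          rw [← mul_assoc]
          apply mul_le_mul_of_nonneg_right _ (norm_nonneg _)
          rw [mul_one_div, div_le_iff₀ hσ]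
          linarith
  have hUS : ‖ev ((U * S) *ᵥ z)‖ = ‖ev (S *ᵥ z)‖ := by
    rw [← Matrix.mulVec_mulVec]
    exact norm_mulVec_isometry U hU _
  have hlow : (1 - ε) * ‖ev (S *ᵥ z)‖ ≤ ‖ev ((L * K) *ᵥ z)‖ := by
    have hdecomp : (L * K) *ᵥ z = (U * S) *ᵥ z + (L * K - U * S) *ᵥ z := by
      have hh : U * S + (L * K - U * S) = L * K := by abel
      conv_lhs => rw [← hh, Matrix.add_mulVec]
    have htri : ‖ev ((U * S) *ᵥ z)‖ - ‖ev ((L * K - U * S) *ᵥ z)‖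
        ≤ ‖ev ((U * S) *ᵥ z) + ev ((L * K - U * S) *ᵥ z)‖ := by
      have h := norm_le_add_norm_add (ev ((U * S) *ᵥ z)) (ev ((L * K - U * S) *ᵥ z))
      linarith
    have hevadd : ev ((U * S) *ᵥ z) + ev ((L * K - U * S) *ᵥ z) = ev ((L * K) *ᵥ z) := by
      rw [← ev_add, ← hdecomp]
    rw [hevadd] at htri
    rw [hUS] at htri
    linarith [hclose]
  have hup : ‖ev ((L * K) *ᵥ z)‖ ≤ 2 * b * ‖ev x‖ := by
    rw [← hMz]
    have hsplit : ev (((L * K1 - U * S) * S) *ᵥ x - ((L * K - U * S) * S) *ᵥ x)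
        = ev (((L * K1 - U * S) * S) *ᵥ x) - ev (((L * K - U * S) * S) *ᵥ x) := rfl
    rw [hsplit]
    calc ‖ev (((L * K1 - U * S) * S) *ᵥ x) - ev (((L * K - U * S) * S) *ᵥ x)‖
        ≤ ‖ev (((L * K1 - U * S) * S) *ᵥ x)‖ + ‖ev (((L * K - U * S) * S) *ᵥ x)‖ :=
          norm_sub_le _ _
      _ ≤ b * ‖ev x‖ + b * ‖ev x‖ := add_le_add
          (le_trans (matSpec_bound _ _) (mul_le_mul_of_nonneg_right h2 (norm_nonneg _)))
          (le_trans (matSpec_bound _ _) (mul_le_mul_of_nonneg_right h1 (norm_nonneg _)))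
      _ = 2 * b * ‖ev x‖ := by ring
  rw [hGx]
  have hfinal : (1 - ε) * ‖ev (S *ᵥ z)‖ ≤ 2 * (ε * σ) * ‖ev x‖ := by
    have h3 : 2 * b * ‖ev x‖ ≤ 2 * (ε * σ) * ‖ev x‖ := by
      apply mul_le_mul_of_nonneg_right _ (norm_nonneg _)
      linarith
    linarith [le_trans hlow (le_trans hup h3)]
  rw [div_mul_eq_mul_div, div_mul_eq_mul_div, le_div_iff₀ h1ε]
  nlinarith [hfinal]

end AlignAux

namespace AlignAux
open RTPCA Complex Matrix

variable {I₁ I₂ I₃ J R : ℕ}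

lemma matSpecNorm_fSlice_le (A : Tensor I₁ I₂ I₃) (k : Fin I₃) :
    matSpecNorm (fSlice A k) ≤ specNorm A :=
  le_ciSup (f := fun k => matSpecNorm (fSlice A k))
    (Set.Finite.bddAbove (Set.finite_range _)) k

lemma sigmaMin_le (Sig : Tensor R R I₃) (k : Fin I₃) (i : Fin R) :
    sigmaMin Sig ≤ (fSlice Sig k i i).re := by
  refine le_trans (ciInf_le (Set.Finite.bddBelow (Set.finite_range _)) k) ?_
  exact ciInf_le (Set.Finite.bddBelow (Set.finite_range _)) i

lemma sigmaMin_pos [Nonempty (Fin I₃)] [Nonempty (Fin R)] (Sig : Tensor R R I₃)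
    (hd : FDiagPos Sig) : 0 < sigmaMin Sig := by
  obtain ⟨k, hk⟩ := exists_eq_ciInf_of_finite
    (f := fun k : Fin I₃ => ⨅ i : Fin R, (fSlice Sig k i i).re)
  rw [sigmaMin, ← hk]
  obtain ⟨i, hi⟩ := exists_eq_ciInf_of_finite (f := fun i : Fin R => (fSlice Sig k i i).re)
  rw [← hi]
  exact (hd.2 k i).1

lemma fSlice_sqrtT_diag [NeZero I₃] (Sig : Tensor R R I₃)
    (hd : ∀ k, ∀ i j : Fin R, i ≠ j → fSlice Sig k i j = 0) (k : Fin I₃) :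
    fSlice (sqrtT Sig) k
      = Matrix.diagonal (fun i => ((Real.sqrt ((fSlice Sig k i i).re) : ℝ) : ℂ)) := by
  ext i j
  by_cases h : i = j
  · subst h
    rw [Matrix.diagonal_apply_eq]
    exact fSlice_sqrtT Sig k i i
  · rw [Matrix.diagonal_apply_ne _ h]
    rw [fSlice_sqrtT Sig k i j]
    have h0 : dft Sig i j k = 0 := hd k i j h
    rw [h0]
    simp

end AlignAux

open AlignAux in
/-- bound on the change of the alignment tensor. -/
theorem alignment_change_bound
    {I₁ I₂ I₃ R : ℕ}
    (Xs : Tensor I₁ I₂ I₃) (Us : Tensor I₁ R I₃) (Sig : Tensor R R I₃) (Vs : Tensor I₂ R I₃)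
    (hsvd : IsSkinnyTSVD Xs Us Sig Vs)
    (ε τ : ℝ) (hε₀ : 0 < ε) (hε₁ : ε < 1) (hτ₀ : 0 < τ) (hτ₁ : τ ≤ 1) (k : ℕ)
    (Lk1 : Tensor I₁ R I₃) (Rk1 : Tensor I₂ R I₃)
    (Qk Qki Qk1 Qk1i : Tensor R R I₃)
    (hQk : TInv Qk Qki)
    (hQk1 : IsOptAlign Lk1 (tprod Us (sqrtT Sig)) Rk1 (tprod Vs (sqrtT Sig)) (sqrtT Sig) Qk1 Qk1i)
    (hbk : max (specNorm (tprod (tprod Lk1 Qk - tprod Us (sqrtT Sig)) (sqrtT Sig)))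
               (specNorm (tprod (tprod Rk1 (tT Qki) - tprod Vs (sqrtT Sig)) (sqrtT Sig)))
             ≤ ε * τ ^ (k + 1) * sigmaMin Sig)
    (hbk1 : max (specNorm (tprod (tprod Lk1 Qk1 - tprod Us (sqrtT Sig)) (sqrtT Sig)))
                (specNorm (tprod (tprod Rk1 (tT Qk1i) - tprod Vs (sqrtT Sig)) (sqrtT Sig)))
             ≤ ε * τ ^ (k + 1) * sigmaMin Sig) :
    max (specNorm (tprod (tprod (tprod (sqrtT Sig) Qki) (Qk1 - Qk)) (sqrtT Sig)))
        (specNorm (tprod (tprod (tprod (sqrtT Sig) (tT Qk)) (tT Qk1i - tT Qki)) (sqrtT Sig)))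
      ≤ 2 * ε / (1 - ε) * sigmaMin Sig := by
  rcases Nat.eq_zero_or_pos I₃ with hI3 | hI3
  · subst hI3
    have h1 : ∀ (T : Tensor R R 0), specNorm T = 0 := fun T => Real.iSup_of_isEmpty _
    have h2 : sigmaMin Sig = 0 := Real.iInf_of_isEmpty _
    rw [h1, h1, h2, mul_zero, max_self]
  have hne3 : NeZero I₃ := ⟨hI3.ne'⟩
  have hnonempty3 : Nonempty (Fin I₃) := ⟨⟨0, hI3⟩⟩
  rcases Nat.eq_zero_or_pos R with hR | hR
  · subst hR
    have hms : ∀ (M : Matrix (Fin 0) (Fin 0) ℂ), matSpecNorm M = 0 := by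
      intro M
      refine le_antisymm ?_ (norm_nonneg _)
      refine ContinuousLinearMap.opNorm_le_bound _ le_rfl fun x => ?_
      have hx : x = 0 := Subsingleton.elim _ _
      rw [hx]
      simp
    have hsn : ∀ (T : Tensor 0 0 I₃), specNorm T = 0 := by
      intro T
      show (⨆ k : Fin I₃, matSpecNorm (fSlice T k)) = 0
      simp_rw [hms]
      exact ciSup_const
    have hsm : sigmaMin Sig = 0 := by
      show (⨅ k : Fin I₃, ⨅ i : Fin 0, (fSlice Sig k i i).re) = 0
      simp_rw [Real.iInf_of_isEmpty]
      exact ciInf_const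
    rw [hsn, hsn, hsm, mul_zero, max_self]
  have hnonemptyR : Nonempty (Fin R) := ⟨⟨0, hR⟩⟩
  set σ := sigmaMin Sig with hσdef
  have hσ : 0 < σ := sigmaMin_pos Sig hsvd.diag
  set b := ε * τ ^ (k + 1) * σ with hbdef
  have hb0 : 0 ≤ b := by positivity
  have hbε : b ≤ ε * σ := by
    have hτ : τ ^ (k + 1) ≤ 1 := pow_le_one₀ hτ₀.le hτ₁
    have h := mul_le_mul_of_nonneg_right (mul_le_mul_of_nonneg_left hτ hε₀.le) hσ.le
    rw [hbdef]
    simpa [mul_one] using h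
  set s : Fin I₃ → Fin R → ℝ := fun k' i => Real.sqrt ((fSlice Sig k' i i).re) with hsdef
  have hSslice : ∀ k', fSlice (sqrtT Sig) k' = Matrix.diagonal (fun i => ((s k' i : ℝ) : ℂ)) :=
    fun k' => fSlice_sqrtT_diag Sig hsvd.diag.1 k'
  have hs0 : ∀ k' i, 0 ≤ s k' i := fun k' i => Real.sqrt_nonneg _
  have hs2 : ∀ k' i, σ ≤ s k' i ^ 2 := by
    intro k' i
    rw [hsdef]
    rw [Real.sq_sqrt (le_of_lt (hsvd.diag.2 k' i).1)]
    exact sigmaMin_le Sig k' i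
  have hUslice : ∀ k', (fSlice Us k')ᴴ * fSlice Us k' = 1 := by
    intro k'
    have h := congrArg (fun T => fSlice T k') hsvd.orthU
    simpa only [fSlice_tprod, fSlice_tT, fSlice_idT] using h
  have hVslice : ∀ k', (fSlice Vs k')ᴴ * fSlice Vs k' = 1 := by
    intro k'
    have h := congrArg (fun T => fSlice T k') hsvd.orthV
    simpa only [fSlice_tprod, fSlice_tT, fSlice_idT] using h
  have hKslice : ∀ k', fSlice Qk k' * fSlice Qki k' = 1 := by
    intro k'
    have h := congrArg (fun T => fSlice T k') hQk.1
    simpa only [fSlice_tprod, fSlice_idT] using h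
  -- per-slice versions of the four spectral-norm hypotheses
  have hL0 : ∀ k', matSpecNorm
      ((fSlice Lk1 k' * fSlice Qk k'
          - fSlice Us k' * Matrix.diagonal (fun i => ((s k' i : ℝ) : ℂ)))
        * Matrix.diagonal (fun i => ((s k' i : ℝ) : ℂ))) ≤ b := by
    intro k'
    have h := le_trans
      (matSpecNorm_fSlice_le (tprod (tprod Lk1 Qk - tprod Us (sqrtT Sig)) (sqrtT Sig)) k')
      (le_trans (le_max_left _ _) hbk)
    rwa [fSlice_tprod, fSlice_sub, fSlice_tprod, fSlice_tprod, hSslice] at h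
  have hL1 : ∀ k', matSpecNorm
      ((fSlice Lk1 k' * fSlice Qk1 k'
          - fSlice Us k' * Matrix.diagonal (fun i => ((s k' i : ℝ) : ℂ)))
        * Matrix.diagonal (fun i => ((s k' i : ℝ) : ℂ))) ≤ b := by
    intro k'
    have h := le_trans
      (matSpecNorm_fSlice_le (tprod (tprod Lk1 Qk1 - tprod Us (sqrtT Sig)) (sqrtT Sig)) k')
      (le_trans (le_max_left _ _) hbk1)
    rwa [fSlice_tprod, fSlice_sub, fSlice_tprod, fSlice_tprod, hSslice] at h
  have hR0 : ∀ k', matSpecNorm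
      ((fSlice Rk1 k' * (fSlice Qki k')ᴴ
          - fSlice Vs k' * Matrix.diagonal (fun i => ((s k' i : ℝ) : ℂ)))
        * Matrix.diagonal (fun i => ((s k' i : ℝ) : ℂ))) ≤ b := by
    intro k'
    have h := le_trans
      (matSpecNorm_fSlice_le (tprod (tprod Rk1 (tT Qki) - tprod Vs (sqrtT Sig)) (sqrtT Sig)) k')
      (le_trans (le_max_right _ _) hbk)
    rwa [fSlice_tprod, fSlice_sub, fSlice_tprod, fSlice_tprod, fSlice_tT, hSslice] at h
  have hR1 : ∀ k', matSpecNorm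
      ((fSlice Rk1 k' * (fSlice Qk1i k')ᴴ
          - fSlice Vs k' * Matrix.diagonal (fun i => ((s k' i : ℝ) : ℂ)))
        * Matrix.diagonal (fun i => ((s k' i : ℝ) : ℂ))) ≤ b := by
    intro k'
    have h := le_trans
      (matSpecNorm_fSlice_le (tprod (tprod Rk1 (tT Qk1i) - tprod Vs (sqrtT Sig)) (sqrtT Sig)) k')
      (le_trans (le_max_right _ _) hbk1)
    rwa [fSlice_tprod, fSlice_sub, fSlice_tprod, fSlice_tprod, fSlice_tT, hSslice] at h
  apply max_le
  · show (⨆ k' : Fin I₃, matSpecNorm (fSlice _ k')) ≤ _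
    apply ciSup_le
    intro k'
    rw [fSlice_tprod, fSlice_tprod, fSlice_tprod, fSlice_sub, hSslice]
    exact key (fSlice Us k') (fSlice Lk1 k') (fSlice Qk k') (fSlice Qki k') (fSlice Qk1 k')
      (s k') σ b ε hσ hε₀ hε₁ hb0 hbε (hs0 k') (hs2 k') (hUslice k') (hKslice k')
      (hL0 k') (hL1 k')
  · show (⨆ k' : Fin I₃, matSpecNorm (fSlice _ k')) ≤ _
    apply ciSup_le
    intro k'
    rw [fSlice_tprod, fSlice_tprod, fSlice_tprod, fSlice_sub, fSlice_tT, fSlice_tT, fSlice_tT,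
      hSslice]
    have hKT : (fSlice Qki k')ᴴ * (fSlice Qk k')ᴴ = 1 := by
      rw [← Matrix.conjTranspose_mul, hKslice k', Matrix.conjTranspose_one]
    exact key (fSlice Vs k') (fSlice Rk1 k') ((fSlice Qki k')ᴴ) ((fSlice Qk k')ᴴ)
      ((fSlice Qk1i k')ᴴ)
      (s k') σ b ε hσ hε₀ hε₁ hb0 hbε (hs0 k') (hs2 k') (hVslice k') hKT
      (hR0 k') (hR1 k')
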